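/- Let g : [0,1] → ℝ be a C¹ function with g(1) = 0. Then there exists a universal constant C such that ∫₀¹ s² g(s)² ds ≤ C ∫₀¹ s² g'(s)² ds. -/

import Mathlib

open MeasureTheory

/-- Cauchy–Schwarz for interval integrals of continuous functions. -/
lemma cs_interval {a b : ℝ} (hab : a ≤ b) {f k : ℝ → ℝ}
    (hf : ContinuousOn f (Set.Icc a b)) (hk : ContinuousOn k (Set.Icc a b)) :
    (∫ t in a..b, f t * k t) ^ 2 ≤
      (∫ t in a..b, (f t) ^ 2) * (∫ t in a..b, (k t) ^ 2) := by
  have huIcc : Set.uIcc a b = Set.Icc a b := Set.uIcc_of_le hab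
  have hif : IntervalIntegrable (fun t => (f t) ^ 2) volume a b :=
    ContinuousOn.intervalIntegrable (by rw [huIcc]; exact hf.pow 2)
  have hik : IntervalIntegrable (fun t => (k t) ^ 2) volume a b :=
    ContinuousOn.intervalIntegrable (by rw [huIcc]; exact hk.pow 2)
  have hifk : IntervalIntegrable (fun t => f t * k t) volume a b :=
    ContinuousOn.intervalIntegrable (by rw [huIcc]; exact hf.mul hk)
  set A := ∫ t in a..b, (f t) ^ 2 with hA
  set B := ∫ t in a..b, (k t) ^ 2 with hB
  set C := ∫ t in a..b, f t * k t with hC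
  have key : ∀ x : ℝ, 0 ≤ A * (x * x) + (-2 * C) * x + B := by
    intro x
    have h1 : (∫ t in a..b, (x * f t - k t) ^ 2)
        = A * (x * x) + (-2 * C) * x + B := by
      have heq : ∀ t, (x * f t - k t) ^ 2
          = (x * x) * (f t) ^ 2 + ((-2 * x) * (f t * k t) + (k t) ^ 2) := by
        intro t; ring
      simp_rw [heq]
      rw [intervalIntegral.integral_add ((hif.const_mul _))
          (((hifk.const_mul _)).add hik),
        intervalIntegral.integral_add ((hifk.const_mul _)) hik,
        intervalIntegral.integral_const_mul, intervalIntegral.integral_const_mul]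
      ring
    have h2 : 0 ≤ ∫ t in a..b, (x * f t - k t) ^ 2 :=
      intervalIntegral.integral_nonneg hab (fun t _ => sq_nonneg _)
    linarith [h1 ▸ h2]
  have hd := discrim_le_zero key
  rw [discrim] at hd
  nlinarith [hd]

theorem poincare_weighted_inequality :
    ∃ C > 0, ∀ g : ℝ → ℝ, ContDiffOn ℝ 1 g (Set.Icc 0 1) → g 1 = 0 →
      ∫ s in (0:ℝ)..1, s ^ 2 * (g s) ^ 2 ≤ C * ∫ s in (0:ℝ)..1, s ^ 2 * (deriv g s) ^ 2 := by
  refine ⟨1, one_pos, ?_⟩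
  intro g hg hg1
  set H : ℝ → ℝ := derivWithin g (Set.Icc 0 1) with hHdef
  have hHcont : ContinuousOn H (Set.Icc 0 1) :=
    hg.continuousOn_derivWithin (uniqueDiffOn_Icc one_pos) le_rfl
  have heq : ∀ t ∈ Set.Ioo (0:ℝ) 1, H t = deriv g t := by
    intro t ht
    exact derivWithin_of_mem_nhds (Icc_mem_nhds ht.1 ht.2)
  -- the two integrals on the right agree
  have hRHS : (∫ s in (0:ℝ)..1, s ^ 2 * (deriv g s) ^ 2)
      = ∫ s in (0:ℝ)..1, s ^ 2 * (H s) ^ 2 := by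
    apply intervalIntegral.integral_congr_ae
    have h1 : ∀ᵐ x : ℝ, x ≠ (1:ℝ) := by
      rw [Filter.eventually_iff, mem_ae_iff]
      simpa using Real.volume_singleton (x := (1:ℝ))
    filter_upwards [h1] with x hx hmem
    rw [Set.uIoc_of_le (by norm_num : (0:ℝ) ≤ 1)] at hmem
    have hx' : x ∈ Set.Ioo (0:ℝ) 1 := ⟨hmem.1, lt_of_le_of_ne hmem.2 hx⟩
    rw [heq x hx']
  set R := ∫ s in (0:ℝ)..1, s ^ 2 * (H s) ^ 2 with hRdef
  have hRnonneg : 0 ≤ R :=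
    intervalIntegral.integral_nonneg (by norm_num)
      (fun t _ => mul_nonneg (sq_nonneg _) (sq_nonneg _))
  have hHint : ∀ s ∈ Set.Ioc (0:ℝ) 1, IntervalIntegrable H volume s 1 := by
    intro s hs
    apply (hHcont.mono _).intervalIntegrable
    rw [Set.uIcc_of_le hs.2]
    exact Set.Icc_subset_Icc (le_of_lt hs.1) le_rfl
  have hkey : ∀ s ∈ Set.Ioc (0:ℝ) 1, g s = -(∫ t in s..1, H t) := by
    intro s hs
    have := intervalIntegral.integral_eq_sub_of_hasDerivAt_of_le hs.2
      (hg.continuousOn.mono (Set.Icc_subset_Icc (le_of_lt hs.1) le_rfl))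
      (fun x hx => by
        have hx' : x ∈ Set.Ioo (0:ℝ) 1 := ⟨lt_trans hs.1 hx.1, hx.2⟩
        have hd : HasDerivWithinAt g (H x) (Set.Icc 0 1) x :=
          ((hg.differentiableOn one_ne_zero) x (Set.mem_Icc.mpr ⟨le_of_lt hx'.1, le_of_lt hx'.2⟩)).hasDerivWithinAt
        exact hd.hasDerivAt (Icc_mem_nhds hx'.1 hx'.2))
      (hHint s hs)
    rw [hg1] at this
    linarith [this]
  -- pointwise bound
  have hpoint : ∀ s ∈ Set.Icc (0:ℝ) 1, s ^ 2 * (g s) ^ 2 ≤ s * R := by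
    intro s hs
    rcases eq_or_lt_of_le hs.1 with hs0 | hs0
    · simp [← hs0]
    have hs' : s ∈ Set.Ioc (0:ℝ) 1 := ⟨hs0, hs.2⟩
    have hsubIcc : Set.Icc s 1 ⊆ Set.Icc (0:ℝ) 1 :=
      Set.Icc_subset_Icc (le_of_lt hs0) le_rfl
    have hfc : ContinuousOn (fun t : ℝ => t⁻¹) (Set.Icc s 1) := by
      apply ContinuousOn.inv₀ continuousOn_id
      intro t ht; exact ne_of_gt (lt_of_lt_of_le hs0 ht.1)
    have hkc : ContinuousOn (fun t : ℝ => t * H t) (Set.Icc s 1) :=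
      continuousOn_id.mul (hHcont.mono hsubIcc)
    have hcs := cs_interval hs'.2 hfc hkc
    have hprod : (∫ t in s..1, (fun t : ℝ => t⁻¹) t * (fun t : ℝ => t * H t) t)
        = ∫ t in s..1, H t := by
      apply intervalIntegral.integral_congr
      intro t ht
      rw [Set.uIcc_of_le hs'.2] at ht
      have : t ≠ 0 := ne_of_gt (lt_of_lt_of_le hs0 ht.1)
      field_simp
    have hinv : (∫ t in s..1, ((fun t : ℝ => t⁻¹) t) ^ 2) = s⁻¹ - 1 := by
      have hderiv : ∀ t ∈ Set.uIcc s 1, HasDerivAt (fun y : ℝ => -y⁻¹) ((t⁻¹) ^ 2) t := by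
        intro t ht
        rw [Set.uIcc_of_le hs'.2] at ht
        have ht0 : t ≠ 0 := ne_of_gt (lt_of_lt_of_le hs0 ht.1)
        have : HasDerivAt (fun y : ℝ => -y⁻¹) (- -(t ^ 2)⁻¹) t := (hasDerivAt_inv ht0).neg
        convert this using 1
        simp
      rw [intervalIntegral.integral_eq_sub_of_hasDerivAt hderiv
        (ContinuousOn.intervalIntegrable (by rw [Set.uIcc_of_le hs'.2]; exact hfc.pow 2))]
      norm_num
      ring
    have hk2 : (∫ t in s..1, ((fun t : ℝ => t * H t) t) ^ 2) ≤ R := by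
      have hre : (∫ t in s..1, (t * H t) ^ 2) = ∫ t in s..1, t ^ 2 * (H t) ^ 2 := by
        apply intervalIntegral.integral_congr; intro t _; ring
      rw [hre]
      apply intervalIntegral.integral_mono_interval (le_of_lt hs0) hs'.2 le_rfl
      · filter_upwards with t
        exact mul_nonneg (sq_nonneg _) (sq_nonneg _)
      · exact ContinuousOn.intervalIntegrable
          (by rw [Set.uIcc_of_le (by norm_num : (0:ℝ) ≤ 1)]
              exact (continuousOn_id.pow 2).mul (hHcont.pow 2))
    have hgeq : (g s) ^ 2 = (∫ t in s..1, H t) ^ 2 := by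
      rw [hkey s hs']; ring
    have hk2nonneg : 0 ≤ ∫ t in s..1, ((fun t : ℝ => t * H t) t) ^ 2 :=
      intervalIntegral.integral_nonneg hs'.2 (fun t _ => sq_nonneg _)
    have hbound : (g s) ^ 2 ≤ s⁻¹ * R := by
      rw [hgeq, ← hprod]
      calc (∫ t in s..1, (fun t : ℝ => t⁻¹) t * (fun t : ℝ => t * H t) t) ^ 2
          ≤ (∫ t in s..1, ((fun t : ℝ => t⁻¹) t) ^ 2) * (∫ t in s..1, ((fun t : ℝ => t * H t) t) ^ 2) := hcs
        _ ≤ s⁻¹ * R := by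
            apply mul_le_mul _ hk2 hk2nonneg (le_of_lt (inv_pos.mpr hs0))
            rw [hinv]; linarith
    calc s ^ 2 * (g s) ^ 2 ≤ s ^ 2 * (s⁻¹ * R) := by
          apply mul_le_mul_of_nonneg_left hbound (sq_nonneg s)
      _ = s * R := by field_simp
  -- integrate the pointwise bound
  have hmain : (∫ s in (0:ℝ)..1, s ^ 2 * (g s) ^ 2) ≤ ∫ s in (0:ℝ)..1, s * R := by
    apply intervalIntegral.integral_mono_on (by norm_num) _ _ hpoint
    · exact ContinuousOn.intervalIntegrable
        (by rw [Set.uIcc_of_le (by norm_num : (0:ℝ) ≤ 1)]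
            exact (continuousOn_id.pow 2).mul (hg.continuousOn.pow 2))
    · exact (continuous_id.mul continuous_const).intervalIntegrable 0 1
  have hhalf : (∫ s in (0:ℝ)..1, s * R) = R / 2 := by
    rw [intervalIntegral.integral_mul_const, integral_id]
    ring
  rw [hRHS, one_mul]
  rw [hhalf] at hmain
  linarith
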